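/- Let U, V, Z be finite sets, let P_{UV} and Q_{UV} be probability mass functions on U × V such that P_{UV}(u,v) = 0 whenever Q_{UV}(u,v) = 0, with marginals P_U, P_V, Q_V, and let Γ₀, Γ₁ be probability mass functions on Z. Define K := sup over probability mass functions π_z on Z of [ D(π_z ‖ Γ₀) − (3/2)·D(π_z ‖ Γ₁) ], define the set 𝒫̄_U := { π_U pmf on U : D(π_U ‖ P_U) ≥ K }, define T_U(u) := Σ_v P_V(v) Q_{U|V}(u|v) where Q_{U|V}(u|v) = Q_{UV}(u,v)/Q_V(v). If T_U ∉ 𝒫̄_U, then the infimum of D(π_{UV} ‖ Q_{UV}) over all probability mass functions π_{UV} on U × V with V-marginal equal to P_V and U-marginal not in 𝒫̄_U equals D(P_V ‖ Q_V). -/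

import Mathlib

open scoped BigOperators

/-- Log-sum inequality with guard conventions. -/
lemma logsum_aux {ι : Type*} [Fintype ι] (a b : ι → ℝ)
    (ha : ∀ i, 0 ≤ a i) (hb : ∀ i, 0 ≤ b i) (hab : ∀ i, b i = 0 → a i = 0) :
    (if 0 < ∑ i, a i then (∑ i, a i) * Real.log ((∑ i, a i) / (∑ i, b i)) else 0)
      ≤ ∑ i, if 0 < a i then a i * Real.log (a i / b i) else 0 := by
  by_cases hSa : 0 < ∑ i, a i
  · rw [if_pos hSa]
    have hSb : 0 < ∑ i, b i := by
      rcases (Finset.sum_nonneg fun i _ => hb i).lt_or_eq with h | h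
      · exact h
      · exfalso
        have hb0 : ∀ i, b i = 0 := fun i =>
          (Finset.sum_eq_zero_iff_of_nonneg (fun i _ => hb i)).1 h.symm i (Finset.mem_univ i)
        have ha0 : ∀ i, a i = 0 := fun i => hab i (hb0 i)
        simp [ha0] at hSa
    set Sa := ∑ i, a i with hSadef
    set Sb := ∑ i, b i with hSbdef
    have key : ∀ i ∈ Finset.univ, a i * Real.log (Sa / Sb) + (a i - b i * (Sa / Sb))
        ≤ if 0 < a i then a i * Real.log (a i / b i) else 0 := by
      intro i _
      by_cases hai : 0 < a i
      · rw [if_pos hai]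
        have hbi : 0 < b i := by
          rcases (hb i).lt_or_eq with h | h
          · exact h
          · exact absurd (hab i h.symm) (ne_of_gt hai)
        have hx : 0 < Sa * b i / (Sb * a i) := by positivity
        have hlog := Real.log_le_sub_one_of_pos hx
        have hrw : Real.log (Sa * b i / (Sb * a i))
            = Real.log (Sa / Sb) - Real.log (a i / b i) := by
          rw [Real.log_div (by positivity) (by positivity),
              Real.log_div (ne_of_gt hSa) (ne_of_gt hSb),
              Real.log_div (ne_of_gt hai) (ne_of_gt hbi),
              Real.log_mul (ne_of_gt hSa) (ne_of_gt hbi),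
              Real.log_mul (ne_of_gt hSb) (ne_of_gt hai)]
          ring
        rw [hrw] at hlog
        have h2 : a i * (Real.log (Sa / Sb) - Real.log (a i / b i))
            ≤ a i * (Sa * b i / (Sb * a i) - 1) :=
          mul_le_mul_of_nonneg_left hlog (le_of_lt hai)
        have h3 : a i * (Sa * b i / (Sb * a i) - 1) = b i * (Sa / Sb) - a i := by
          field_simp
        nlinarith [h2, h3]
      · rw [if_neg hai]
        have hai0 : a i = 0 := le_antisymm (not_lt.1 hai) (ha i)
        have hbnn : 0 ≤ b i * (Sa / Sb) := mul_nonneg (hb i) (div_nonneg hSa.le hSb.le)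
        rw [hai0]; linarith
    calc Sa * Real.log (Sa / Sb)
        = ∑ i, (a i * Real.log (Sa / Sb) + (a i - b i * (Sa / Sb))) := by
          rw [Finset.sum_add_distrib, ← Finset.sum_mul, Finset.sum_sub_distrib,
            ← Finset.sum_mul, ← hSadef, ← hSbdef]
          have h4 : Sb * (Sa / Sb) = Sa := by field_simp
          rw [h4]; ring
      _ ≤ ∑ i, if 0 < a i then a i * Real.log (a i / b i) else 0 := Finset.sum_le_sum key
  · rw [if_neg hSa]
    have hSa0 : ∑ i, a i = 0 :=
      le_antisymm (not_lt.1 hSa) (Finset.sum_nonneg fun i _ => ha i)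
    have ha0 : ∀ i, a i = 0 := fun i =>
      (Finset.sum_eq_zero_iff_of_nonneg (fun i _ => ha i)).1 hSa0 i (Finset.mem_univ i)
    simp [ha0]

/-- `P` is a probability mass function on the finite set `Z`. -/
def IsPmf {Z : Type*} [Fintype Z] (P : Z → ℝ) : Prop :=
  (∀ z, 0 ≤ P z) ∧ ∑ z, P z = 1

/-- Kullback–Leibler divergence (natural log, terms with `P z = 0` contribute `0`);
only meaningful when `P` is absolutely continuous w.r.t. `Q`. -/
noncomputable def klDiv {Z : Type*} [Fintype Z] (P Q : Z → ℝ) : ℝ :=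
  ∑ z, if 0 < P z then P z * Real.log (P z / Q z) else 0

/-- Extended-real Kullback–Leibler divergence: equals `+∞` if `P` is not absolutely
continuous with respect to `Q`. -/
noncomputable def klDivE {Z : Type*} [Fintype Z] (P Q : Z → ℝ) : EReal :=
  if ∀ z, Q z = 0 → P z = 0 then ((klDiv P Q : ℝ) : EReal) else ⊤

/-- `K := sup` over pmfs `π` on `Z` of `D(π‖Γ₀) - (3/2)·D(π‖Γ₁)`, in the extended reals
(in `EReal`, terms with `D(π‖Γ₁) = +∞` equal `-∞`, as in the convention). -/
noncomputable def Ksup {Z : Type*} [Fintype Z] (Γ0 Γ1 : Z → ℝ) : EReal :=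
  ⨆ π : {p : Z → ℝ // IsPmf p},
    klDivE (π : Z → ℝ) Γ0 - ((3 / 2 : ℝ) : EReal) * klDivE (π : Z → ℝ) Γ1

/-- Chain-rule lower bound: KL of marginals is at most KL of joints. -/
lemma klDiv_marg_le {U V : Type*} [Fintype U] [Fintype V]
    (π Q : U × V → ℝ) (hπ : ∀ p, 0 ≤ π p) (hQ : ∀ p, 0 ≤ Q p)
    (hab : ∀ p, Q p = 0 → π p = 0) :
    klDiv (fun v => ∑ u, π (u, v)) (fun v => ∑ u, Q (u, v)) ≤ klDiv π Q := by
  unfold klDiv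
  rw [Fintype.sum_prod_type_right]
  exact Finset.sum_le_sum fun v _ =>
    logsum_aux (fun u => π (u, v)) (fun u => Q (u, v))
      (fun u => hπ (u, v)) (fun u => hQ (u, v)) (fun u h => hab (u, v) h)
theorem sInf_klDiv_eq_of_TU_not_mem_Pbar {U V Z : Type*}
    [Fintype U] [Fintype V] [Fintype Z]
    (P Q : U × V → ℝ) (hP : IsPmf P) (hQ : IsPmf Q)
    (habs : ∀ p, Q p = 0 → P p = 0)
    (Γ0 Γ1 : Z → ℝ) (hΓ0 : IsPmf Γ0) (hΓ1 : IsPmf Γ1)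
    (hTU : ¬ Ksup Γ0 Γ1 ≤
        klDivE (fun u => ∑ v, (∑ u', P (u', v)) * (Q (u, v) / ∑ u', Q (u', v)))
          (fun u => ∑ v, P (u, v))) :
    sInf {d : EReal | ∃ π : U × V → ℝ, IsPmf π ∧
          (∀ v, ∑ u, π (u, v) = ∑ u, P (u, v)) ∧
          ¬ Ksup Γ0 Γ1 ≤ klDivE (fun u => ∑ v, π (u, v)) (fun u => ∑ v, P (u, v)) ∧
          d = klDivE π Q}
      = klDivE (fun v => ∑ u, P (u, v)) (fun v => ∑ u, Q (u, v)) := by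
  -- abbreviations
  have hPnn := hP.1
  have hQnn := hQ.1
  have hQV0 : ∀ v, (∑ u, Q (u, v)) = 0 → ∀ u, Q (u, v) = 0 := fun v h u =>
    (Finset.sum_eq_zero_iff_of_nonneg (fun u _ => hQnn (u, v))).1 h u (Finset.mem_univ u)
  have hPV0 : ∀ v, (∑ u, Q (u, v)) = 0 → (∑ u, P (u, v)) = 0 := fun v h =>
    Finset.sum_eq_zero fun u _ => habs (u, v) (hQV0 v h u)
  have hPVnn : ∀ v, 0 ≤ ∑ u, P (u, v) := fun v => Finset.sum_nonneg fun u _ => hPnn (u, v)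
  have hQVnn : ∀ v, 0 ≤ ∑ u, Q (u, v) := fun v => Finset.sum_nonneg fun u _ => hQnn (u, v)
  set πs : U × V → ℝ := fun p => (∑ u, P (u, p.2)) * (Q p / ∑ u, Q (u, p.2)) with hπs
  have hπsnn : ∀ p, 0 ≤ πs p := fun p =>
    mul_nonneg (hPVnn p.2) (div_nonneg (hQnn p) (hQVnn p.2))
  have hπsabs : ∀ p, Q p = 0 → πs p = 0 := by
    intro p h; simp [hπs, h]
  have hmarg : ∀ v, ∑ u, πs (u, v) = ∑ u, P (u, v) := by
    intro v
    have : ∑ u, πs (u, v) = (∑ u, P (u, v)) * ((∑ u, Q (u, v)) / (∑ u, Q (u, v))) := by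
      simp only [hπs]
      rw [← Finset.mul_sum, ← Finset.sum_div]
    rw [this]
    rcases (hQVnn v).lt_or_eq with h | h
    · rw [div_self (ne_of_gt h), mul_one]
    · rw [hPV0 v h.symm, zero_mul]
  have hπspmf : IsPmf πs := by
    refine ⟨hπsnn, ?_⟩
    rw [Fintype.sum_prod_type_right]
    calc ∑ v, ∑ u, πs (u, v) = ∑ v, ∑ u, P (u, v) := by
          exact Finset.sum_congr rfl fun v _ => hmarg v
      _ = 1 := by rw [← Fintype.sum_prod_type_right]; exact hP.2
  -- absolute continuity of marginals
  have habsV : ∀ v, (∑ u, Q (u, v)) = 0 → (∑ u, P (u, v)) = 0 := hPV0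
  -- the value of klDiv πs Q
  have hval : klDiv πs Q = klDiv (fun v => ∑ u, P (u, v)) (fun v => ∑ u, Q (u, v)) := by
    unfold klDiv
    rw [Fintype.sum_prod_type_right]
    refine Finset.sum_congr rfl fun v _ => ?_
    dsimp only
    rcases (hQVnn v).lt_or_eq with hQV | hQV
    · rcases (hPVnn v).lt_or_eq with hPV | hPV
      · rw [if_pos hPV]
        have hterm : ∀ u, (if 0 < πs (u, v) then πs (u, v) * Real.log (πs (u, v) / Q (u, v)) else 0)
            = πs (u, v) * Real.log ((∑ u, P (u, v)) / (∑ u, Q (u, v))) := by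
          intro u
          rcases (hQnn (u, v)).lt_or_eq with hq | hq
          · have hπpos : 0 < πs (u, v) := by
              simp only [hπs]; exact mul_pos hPV (div_pos hq hQV)
            rw [if_pos hπpos]
            congr 2
            simp only [hπs]
            have hq' : Q (u, v) ≠ 0 := ne_of_gt hq
            have hQV' : (∑ u, Q (u, v)) ≠ 0 := ne_of_gt hQV
            field_simp
          · have hπ0 : πs (u, v) = 0 := hπsabs (u, v) hq.symm
            rw [hπ0]; simp
        calc (∑ u, if 0 < πs (u, v) then πs (u, v) * Real.log (πs (u, v) / Q (u, v)) else 0)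
            = ∑ u, πs (u, v) * Real.log ((∑ u, P (u, v)) / (∑ u, Q (u, v))) :=
              Finset.sum_congr rfl fun u _ => hterm u
          _ = (∑ u, πs (u, v)) * Real.log ((∑ u, P (u, v)) / (∑ u, Q (u, v))) := by
              rw [Finset.sum_mul]
          _ = (∑ u, P (u, v)) * Real.log ((∑ u, P (u, v)) / (∑ u, Q (u, v))) := by
              rw [hmarg v]
      · have hπ0 : ∀ u, πs (u, v) = 0 := by
          intro u; simp only [hπs]; rw [← hPV, zero_mul]
        rw [if_neg (by rw [← hPV]; exact lt_irrefl 0)]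
        simp [hπ0]
    · have hPVv : (∑ u, P (u, v)) = 0 := hPV0 v hQV.symm
      have hπ0 : ∀ u, πs (u, v) = 0 := fun u => hπsabs (u, v) (hQV0 v hQV.symm u)
      rw [if_neg (by rw [hPVv]; exact lt_irrefl 0)]
      simp [hπ0]
  -- the target value in EReal form
  have hcE : klDivE (fun v => ∑ u, P (u, v)) (fun v => ∑ u, Q (u, v))
      = ((klDiv (fun v => ∑ u, P (u, v)) (fun v => ∑ u, Q (u, v)) : ℝ) : EReal) := by
    unfold klDivE
    exact if_pos habsV
  have hπsE : klDivE πs Q = ((klDiv πs Q : ℝ) : EReal) := by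
    unfold klDivE; exact if_pos hπsabs
  apply le_antisymm
  · -- sInf ≤ value: membership
    apply sInf_le
    refine ⟨πs, hπspmf, hmarg, ?_, ?_⟩
    · exact hTU
    · rw [hcE, hπsE, hval]
  · -- lower bound
    apply le_sInf
    rintro d ⟨π, hπpmf, hπmarg, -, rfl⟩
    unfold klDivE
    by_cases habsπ : ∀ p, Q p = 0 → π p = 0
    · rw [if_pos habsπ, if_pos habsV, EReal.coe_le_coe_iff]
      have h1 : klDiv (fun v => ∑ u, π (u, v)) (fun v => ∑ u, Q (u, v)) ≤ klDiv π Q :=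
        klDiv_marg_le π Q hπpmf.1 hQnn habsπ
      have h2 : (fun v => ∑ u, π (u, v)) = fun v => ∑ u, P (u, v) := funext hπmarg
      rwa [h2] at h1
    · rw [if_neg habsπ]
      exact le_top
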